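/- If w is a reduced word for a permutation σ ∈ S_n, then the Edelman–Greene insertion tableau P(w) has strictly increasing rows and columns, and its reading word r(P(w)) is also a reduced word for σ. -/

import Mathlib

/-- The adjacent transposition `s_a` (1-indexed letter `a`) acting on positions `Fin n`. -/
def adjT (n a : ℕ) : Equiv.Perm (Fin n) :=
  if h : 1 ≤ a ∧ a < n then Equiv.swap ⟨a - 1, by omega⟩ ⟨a, h.2⟩ else 1

/-- The permutation `s_{w_1} ∘ s_{w_2} ∘ ⋯ ∘ s_{w_m}` of a word, transpositions acting on
positions composed from the left (`s_{w_1}` applied first to the identity). -/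
def permOfWord (n : ℕ) (w : List ℕ) : Equiv.Perm (Fin n) :=
  (w.map (adjT n)).prod

/-- The set of inversions of a permutation. -/
def invSet {n : ℕ} (σ : Equiv.Perm (Fin n)) : Set (Fin n × Fin n) :=
  {p | p.1 < p.2 ∧ σ p.2 < σ p.1}

/-- The number of inversions. -/
noncomputable def invNum {n : ℕ} (σ : Equiv.Perm (Fin n)) : ℕ := (invSet σ).ncard

/-- `w` is a reduced word for `σ`: letters in `[n-1]`, the product of the corresponding
adjacent transpositions is `σ`, and the length is `inv σ`. -/
def IsReducedWord (n : ℕ) (σ : Equiv.Perm (Fin n)) (w : List ℕ) : Prop :=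
  (∀ a ∈ w, 1 ≤ a ∧ a < n) ∧ permOfWord n w = σ ∧ w.length = invNum σ

/-- `σ` avoids the pattern 132. -/
def Avoids132 {n : ℕ} (σ : Equiv.Perm (Fin n)) : Prop :=
  ¬ ∃ i1 i2 i3 : Fin n, i1 < i2 ∧ i2 < i3 ∧ σ i1 < σ i3 ∧ σ i3 < σ i2

/-- `σ` avoids the pattern 312. -/
def Avoids312 {n : ℕ} (σ : Equiv.Perm (Fin n)) : Prop :=
  ¬ ∃ i1 i2 i3 : Fin n, i1 < i2 ∧ i2 < i3 ∧ σ i2 < σ i3 ∧ σ i3 < σ i1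

/-- The Rothe diagram of `σ` (permutation matrix with 1s at `(σ i, i)`, 0-indexed):
cells strictly north of the 1 in their column and strictly west of the 1 in their row. -/
def rothe {n : ℕ} (σ : Equiv.Perm (Fin n)) : Set (Fin n × Fin n) :=
  {p | p.1 < σ p.2 ∧ p.2 < σ.symm p.1}

/-- Two cells are adjacent if they share an edge. -/
def adjCell {n : ℕ} (p q : Fin n × Fin n) : Prop :=
  (p.1 = q.1 ∧ ((p.2 : ℕ) + 1 = q.2 ∨ (q.2 : ℕ) + 1 = p.2)) ∨
  (p.2 = q.2 ∧ ((p.1 : ℕ) + 1 = q.1 ∨ (q.1 : ℕ) + 1 = p.1))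

/-- The connected component of the Rothe diagram containing the (0-indexed) cell `(0,0)`,
empty if `(0,0)` is not in the diagram. -/
def comp11 {n : ℕ} (σ : Equiv.Perm (Fin n)) : Set (Fin n × Fin n) :=
  {p | ∃ h0 : 0 < n,
    Relation.ReflTransGen (fun a b => a ∈ rothe σ ∧ b ∈ rothe σ ∧ adjCell a b)
      (⟨⟨0, h0⟩, ⟨0, h0⟩⟩) p ∧
    p ∈ rothe σ ∧ ((⟨⟨0, h0⟩, ⟨0, h0⟩⟩ : Fin n × Fin n)) ∈ rothe σ}

/-- Edelman–Greene insertion of `x` into a single (strictly increasing) row: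
returns the new row and the optional entry bumped into the next row. -/
def insRow (x : ℕ) : List ℕ → List ℕ × Option ℕ
  | [] => ([x], none)
  | z :: zs =>
    if z < x then
      let r := insRow x zs
      (z :: r.1, r.2)
    else if z = x then (z :: zs, some (z + 1))
    else (x :: zs, some z)

/-- Edelman–Greene insertion of `x` into a tableau (list of rows). -/
def insTab (x : ℕ) : List (List ℕ) → List (List ℕ)
  | [] => [[x]]
  | r :: rs =>
    let p := insRow x r
    match p.2 with
    | none => p.1 :: rs
    | some y => p.1 :: insTab y rs

/-- The Edelman–Greene insertion tableau `P(w)`. -/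
def Ptab (w : List ℕ) : List (List ℕ) := w.foldl (fun t x => insTab x t) []

/-- Add the label `k` to the recording tableau `q` at the unique new cell of shape `p`. -/
def recordCell (k : ℕ) : List (List ℕ) → List (List ℕ) → List (List ℕ)
  | _, [] => []
  | [], _ :: _ => [[k]]
  | q :: qs, p :: ps =>
    if q.length < p.length then (q ++ [k]) :: qs else q :: recordCell k qs ps

/-- The Edelman–Greene recording tableau `Q(w) = EG(w)`. -/
def Qtab (w : List ℕ) : List (List ℕ) :=
  (w.foldl (fun pq x =>
      let P' := insTab x pq.1
      (P', recordCell (pq.2.flatten.length + 1) pq.2 P'))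
    (([], []) : List (List ℕ) × List (List ℕ))).2

/-- A tableau is frozen if the cell in (0-indexed) row `i`, column `j` contains `i + j + 1`. -/
def Frozen (P : List (List ℕ)) : Prop :=
  ∀ i j, i < P.length → j < (P.getD i []).length → (P.getD i []).getD j 0 = i + j + 1

/-- All rows strictly increasing. -/
def RowStrict (P : List (List ℕ)) : Prop := ∀ r ∈ P, List.Pairwise (· < ·) r

/-- All columns strictly increasing. -/
def ColStrict (P : List (List ℕ)) : Prop :=
  ∀ i j, i + 1 < P.length → j < (P.getD (i + 1) []).length →
    (P.getD i []).getD j 0 < (P.getD (i + 1) []).getD j 0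

/-- Valid Young-diagram shape: nonempty rows of weakly decreasing lengths. -/
def TabShape (P : List (List ℕ)) : Prop :=
  (∀ r ∈ P, r ≠ []) ∧ ∀ i, i + 1 < P.length → (P.getD (i + 1) []).length ≤ (P.getD i []).length

/-- The reading word: rows left to right, from the bottom row up. -/
def readingWord (P : List (List ℕ)) : List ℕ := P.reverse.flatten

/-- A standard Young tableau: valid shape, strictly increasing rows and columns, and the
entries are `1, …, N` each exactly once. -/
def IsStandard (Q : List (List ℕ)) : Prop :=
  TabShape Q ∧ RowStrict Q ∧ ColStrict Q ∧ Q.flatten.Perm (List.range' 1 Q.flatten.length)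

/-- `Q` has the staircase shape `sc_n = (n-1, n-2, …, 1)`. -/
def StaircaseShape (n : ℕ) (Q : List (List ℕ)) : Prop :=
  Q.length = n - 1 ∧ ∀ i, i < n - 1 → (Q.getD i []).length = n - 1 - i

/-- A sorting network: a reduced word of the reverse permutation in `S_n`. -/
def IsSortingNetwork (n : ℕ) (w : List ℕ) : Prop :=
  IsReducedWord n Fin.revPerm w

/-- Every intermediate permutation of the word avoids 132. -/
def Avoiding132 (n : ℕ) (w : List ℕ) : Prop :=
  ∀ k, k ≤ w.length → Avoids132 (permOfWord n (w.take k))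

/-- Every intermediate permutation of the word avoids 312. -/
def Avoiding312 (n : ℕ) (w : List ℕ) : Prop :=
  ∀ k, k ≤ w.length → Avoids312 (permOfWord n (w.take k))

/-- `c` is the column word of `Q`: its `k`-th letter (1-indexed) is the (1-indexed) column
of the entry `k` in `Q`. -/
def IsColumnWord (Q : List (List ℕ)) (c : List ℕ) : Prop :=
  c.length = Q.flatten.length ∧
  ∀ k, k < c.length → ∃ i j, i < Q.length ∧ j < (Q.getD i []).length ∧
    (Q.getD i []).getD j 0 = k + 1 ∧ c.getD k 0 = j + 1

/-- All anti-diagonals of `Q` increase downwards: `Q_{i,j} > Q_{i-1,j+1}` (1-indexed). -/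
def AntiDiagDown (Q : List (List ℕ)) : Prop :=
  ∀ i j, i + 1 < Q.length → j < (Q.getD (i + 1) []).length → j + 1 < (Q.getD i []).length →
    (Q.getD i []).getD (j + 1) 0 < (Q.getD (i + 1) []).getD j 0

namespace EGProof

open List

/-! ### Basic lemmas about `adjT` and `permOfWord` -/

lemma adjT_invalid {n a : ℕ} (h : ¬(1 ≤ a ∧ a < n)) : adjT n a = 1 := dif_neg h

lemma adjT_apply_val {n a : ℕ} (h : 1 ≤ a ∧ a < n) (q : Fin n) :
    ((adjT n a) q : ℕ) = if (q : ℕ) = a - 1 then a else if (q : ℕ) = a then a - 1 else q := by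
  have hs : adjT n a = Equiv.swap ⟨a - 1, by omega⟩ ⟨a, h.2⟩ := dif_pos h
  rw [hs, Equiv.swap_apply_def]
  clear hs
  split_ifs <;> (try simp only [Fin.ext_iff, Fin.val_mk] at *) <;> omega

lemma adjT_mul_self (n a : ℕ) : adjT n a * adjT n a = 1 := by
  by_cases h : 1 ≤ a ∧ a < n
  · have hs : adjT n a = Equiv.swap ⟨a - 1, by omega⟩ ⟨a, h.2⟩ := dif_pos h
    rw [hs, Equiv.swap_mul_self]
  · rw [adjT_invalid h, mul_one]

lemma adjT_comm {n a b : ℕ} (h : a + 2 ≤ b) : Commute (adjT n a) (adjT n b) := by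
  by_cases ha : 1 ≤ a ∧ a < n
  · by_cases hb : 1 ≤ b ∧ b < n
    · have hsa : adjT n a = Equiv.swap ⟨a - 1, by omega⟩ ⟨a, ha.2⟩ := dif_pos ha
      have hsb : adjT n b = Equiv.swap ⟨b - 1, by omega⟩ ⟨b, hb.2⟩ := dif_pos hb
      rw [hsa, hsb]
      set i1 : Fin n := ⟨a - 1, by omega⟩
      set i2 : Fin n := ⟨a, ha.2⟩
      set j1 : Fin n := ⟨b - 1, by omega⟩
      set j2 : Fin n := ⟨b, hb.2⟩
      have key : Equiv.swap i1 i2 =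
          Equiv.swap j1 j2 * Equiv.swap i1 i2 * (Equiv.swap j1 j2)⁻¹ := by
        rw [← Equiv.swap_apply_apply,
          Equiv.swap_apply_of_ne_of_ne (by simp only [ne_eq, Fin.ext_iff, Fin.val_mk, i1, i2, j1, j2]; omega) (by simp only [ne_eq, Fin.ext_iff, Fin.val_mk, i1, i2, j1, j2]; omega),
          Equiv.swap_apply_of_ne_of_ne (by simp only [ne_eq, Fin.ext_iff, Fin.val_mk, i1, i2, j1, j2]; omega) (by simp only [ne_eq, Fin.ext_iff, Fin.val_mk, i1, i2, j1, j2]; omega)]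
      show Equiv.swap i1 i2 * Equiv.swap j1 j2 = Equiv.swap j1 j2 * Equiv.swap i1 i2
      calc Equiv.swap i1 i2 * Equiv.swap j1 j2
          = (Equiv.swap j1 j2 * Equiv.swap i1 i2 * (Equiv.swap j1 j2)⁻¹) * Equiv.swap j1 j2 := by
            rw [← key]
        _ = Equiv.swap j1 j2 * Equiv.swap i1 i2 := by group
    · rw [adjT_invalid hb]; exact Commute.one_right _
  · rw [adjT_invalid ha]; exact Commute.one_left _

lemma adjT_braid {n a : ℕ} (ha : 1 ≤ a) (hb : a + 1 < n) :
    adjT n a * adjT n (a + 1) * adjT n a = adjT n (a + 1) * adjT n a * adjT n (a + 1) := by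
  have h1 : 1 ≤ a ∧ a < n := ⟨ha, by omega⟩
  have h2 : 1 ≤ a + 1 ∧ a + 1 < n := ⟨by omega, hb⟩
  have hsa : adjT n a = Equiv.swap ⟨a - 1, by omega⟩ ⟨a, h1.2⟩ := dif_pos h1
  have hsb : adjT n (a + 1) = Equiv.swap ⟨a + 1 - 1, by omega⟩ ⟨a + 1, h2.2⟩ := dif_pos h2
  set i : Fin n := ⟨a - 1, by omega⟩ with hi
  set j : Fin n := ⟨a, h1.2⟩ with hj
  set k : Fin n := ⟨a + 1, h2.2⟩ with hk
  have hj' : (⟨a + 1 - 1, by omega⟩ : Fin n) = j := by simp only [Fin.ext_iff, Fin.val_mk, j]; omega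
  rw [hsa, hsb, hj']
  have hij : i ≠ j := by simp only [ne_eq, Fin.ext_iff, Fin.val_mk, i, j, k]; omega
  have hjk : j ≠ k := by simp only [ne_eq, Fin.ext_iff, Fin.val_mk, i, j, k]; omega
  have hik : i ≠ k := by simp only [ne_eq, Fin.ext_iff, Fin.val_mk, i, j, k]; omega
  -- LHS: swap i j * swap j k * swap i j ; use pattern swap y z * swap x y * swap y z = swap z x
  have L : Equiv.swap j i * Equiv.swap k j * Equiv.swap j i = Equiv.swap i k :=
    Equiv.swap_mul_swap_mul_swap hjk.symm hik.symm
  have R : Equiv.swap j k * Equiv.swap i j * Equiv.swap j k = Equiv.swap k i :=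
    Equiv.swap_mul_swap_mul_swap hij hik
  calc Equiv.swap i j * Equiv.swap j k * Equiv.swap i j
      = Equiv.swap j i * Equiv.swap k j * Equiv.swap j i := by
        rw [Equiv.swap_comm i j, Equiv.swap_comm j k]
    _ = Equiv.swap i k := L
    _ = Equiv.swap k i := Equiv.swap_comm _ _
    _ = Equiv.swap j k * Equiv.swap i j * Equiv.swap j k := R.symm


@[simp] lemma permOfWord_nil (n : ℕ) : permOfWord n [] = 1 := rfl

lemma permOfWord_cons (n a : ℕ) (w : List ℕ) :
    permOfWord n (a :: w) = adjT n a * permOfWord n w := by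
  simp [permOfWord]

lemma permOfWord_append (n : ℕ) (u v : List ℕ) :
    permOfWord n (u ++ v) = permOfWord n u * permOfWord n v := by
  simp [permOfWord]

lemma permOfWord_singleton (n a : ℕ) : permOfWord n [a] = adjT n a := by
  simp [permOfWord]

lemma commute_adjT_permOfWord {n b : ℕ} {A : List ℕ}
    (h : ∀ a ∈ A, a + 2 ≤ b ∨ b + 2 ≤ a) :
    Commute (adjT n b) (permOfWord n A) := by
  induction A with
  | nil => simp only [permOfWord_nil]; exact Commute.one_right _
  | cons a A ih =>
    rw [permOfWord_cons]
    refine Commute.mul_right ?_ (ih fun a ha => h a (mem_cons_of_mem _ ha))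
    rcases h a (mem_cons_self) with h' | h'
    · exact (adjT_comm h').symm
    · exact adjT_comm h'

/-! ### Inversion-number lemmas -/

lemma invNum_one (n : ℕ) : invNum (1 : Equiv.Perm (Fin n)) = 0 := by
  have : invSet (1 : Equiv.Perm (Fin n)) = ∅ := by
    ext p
    simp only [invSet, Set.mem_setOf_eq, Set.mem_empty_iff_false, iff_false, not_and,
      Equiv.Perm.one_apply]
    exact fun h => not_lt.2 h.le
  rw [invNum, this, Set.ncard_empty]

lemma invNum_mul_adjT_le (n a : ℕ) (σ : Equiv.Perm (Fin n)) :
    invNum (σ * adjT n a) ≤ invNum σ + 1 := by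
  by_cases h : 1 ≤ a ∧ a < n
  · set i1 : Fin n := ⟨a - 1, by omega⟩ with hi1
    set i2 : Fin n := ⟨a, h.2⟩ with hi2
    set g : (Fin n × Fin n) ≃ (Fin n × Fin n) :=
      Equiv.prodCongr (adjT n a) (adjT n a) with hg
    have hinv : ∀ z : Fin n, (adjT n a) ((adjT n a) z) = z := by
      intro z
      rw [← Equiv.Perm.mul_apply, adjT_mul_self, Equiv.Perm.one_apply]
    have hsub : invSet (σ * adjT n a) ⊆ (g '' invSet σ) ∪ {(i1, i2)} := by
      rintro ⟨p1, p2⟩ ⟨hlt, hinvp⟩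
      by_cases hp : p1 = i1 ∧ p2 = i2
      · right; simp [hp.1, hp.2]
      · left
        refine ⟨((adjT n a) p1, (adjT n a) p2), ⟨?_, ?_⟩, ?_⟩
        · -- adjT n a p1 < adjT n a p2
          have hp' : ¬((p1 : ℕ) = a - 1 ∧ (p2 : ℕ) = a) := by
            simpa [hi1, hi2, Fin.ext_iff] using hp
          have hlt' : (p1 : ℕ) < (p2 : ℕ) := hlt
          rw [Fin.lt_def, adjT_apply_val h, adjT_apply_val h]
          split_ifs <;> omega
        · -- σ (adjT p2) < σ (adjT p1)
          simpa [Equiv.Perm.mul_apply] using hinvp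
        · simp [hg, Equiv.prodCongr_apply, hinv]
    calc invNum (σ * adjT n a) = (invSet (σ * adjT n a)).ncard := rfl
      _ ≤ ((g '' invSet σ) ∪ {(i1, i2)}).ncard :=
          Set.ncard_le_ncard hsub (Set.toFinite _)
      _ ≤ (g '' invSet σ).ncard + ({(i1, i2)} : Set (Fin n × Fin n)).ncard :=
          Set.ncard_union_le _ _
      _ = invNum σ + 1 := by
          rw [Set.ncard_image_of_injective _ g.injective, Set.ncard_singleton]; rfl
  · rw [adjT_invalid h, mul_one]; omega

lemma invNum_append_le (n : ℕ) (A B : List ℕ) :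
    invNum (permOfWord n (A ++ B)) ≤ invNum (permOfWord n A) + B.length := by
  induction B using List.reverseRecOn with
  | nil => simp
  | append_singleton B b ih =>
    have : A ++ (B ++ [b]) = (A ++ B) ++ [b] := by simp
    rw [this, permOfWord_append, permOfWord_singleton]
    have h1 := invNum_mul_adjT_le n b (permOfWord n (A ++ B))
    simp only [length_append, length_singleton]
    omega

lemma invNum_le_length (n : ℕ) (W : List ℕ) :
    invNum (permOfWord n W) ≤ W.length := by
  have := invNum_append_le n [] W
  simpa [invNum_one] using this

lemma reduced_prefix {n : ℕ} {A B : List ℕ}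
    (h : invNum (permOfWord n (A ++ B)) = A.length + B.length) :
    invNum (permOfWord n A) = A.length := by
  have h1 := invNum_append_le n A B
  have h2 := invNum_le_length n A
  omega

lemma reduced_letters {n : ℕ} {W : List ℕ}
    (h : invNum (permOfWord n W) = W.length) :
    ∀ a ∈ W, 1 ≤ a ∧ a < n := by
  intro a ha
  by_contra hinval
  obtain ⟨s, t, rfl⟩ := List.append_of_mem ha
  have heq : permOfWord n (s ++ a :: t) = permOfWord n (s ++ t) := by
    rw [permOfWord_append, permOfWord_append, permOfWord_cons, adjT_invalid hinval, one_mul]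
  rw [heq] at h
  have hle := invNum_le_length n (s ++ t)
  simp only [length_append, length_cons] at h hle
  omega

/-! ### List helpers -/

lemma getD_mem {l : List ℕ} {j : ℕ} (h : j < l.length) : l.getD j 0 ∈ l := by
  rw [List.getD_eq_getElem l 0 h]
  exact List.getElem_mem h

lemma getD_zero_headD (T : List (List ℕ)) : T.getD 0 [] = T.headD [] := by
  cases T <;> rfl

lemma dropWhile_head_false {α : Type*} {p : α → Bool} :
    ∀ {l : List α} {b : α} {t : List α}, l.dropWhile p = b :: t → p b = false := by
  intro l
  induction l with
  | nil => intro b t h; simp [List.dropWhile] at h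
  | cons a l ih =>
    intro b t h
    rw [List.dropWhile_cons] at h
    by_cases hp : p a
    · rw [if_pos hp] at h; exact ih h
    · rw [if_neg hp] at h
      obtain ⟨rfl, rfl⟩ : a = b ∧ l = t := by
        constructor <;> [exact (List.cons.injEq .. ▸ h).1; exact (List.cons.injEq .. ▸ h).2]
      simpa using hp

lemma takeWhile_idx {p : ℕ → Bool} {L : List ℕ} {i : ℕ}
    (h : i < (L.takeWhile p).length) : p (L.getD i 0) = true := by
  obtain ⟨t, ht⟩ := (L.takeWhile_prefix p)
  rw [← ht, List.getD_append _ _ _ _ h]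
  exact List.mem_takeWhile_imp (getD_mem h)

lemma takeWhile_length_le_of_not {p : ℕ → Bool} {L : List ℕ} {i : ℕ}
    (h : p (L.getD i 0) = false) : (L.takeWhile p).length ≤ i := by
  by_contra h'
  push_neg at h'
  rw [takeWhile_idx h'] at h
  simp at h

lemma takeWhile_length_le (p : ℕ → Bool) (L : List ℕ) :
    (L.takeWhile p).length ≤ L.length := (L.takeWhile_sublist p).length_le

lemma sorted_append_iff {l₁ l₂ : List ℕ} :
    (l₁ ++ l₂).Pairwise (· < ·) ↔
      l₁.Pairwise (· < ·) ∧ l₂.Pairwise (· < ·) ∧ ∀ a ∈ l₁, ∀ b ∈ l₂, a < b :=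
  List.pairwise_append

/-! ### insRow / insTab equations -/

lemma insRow_all_lt {x : ℕ} : ∀ {A : List ℕ}, (∀ a ∈ A, a < x) →
    insRow x A = (A ++ [x], none) := by
  intro A
  induction A with
  | nil => intro _; rfl
  | cons a A ih =>
    intro hA
    have ha : a < x := hA a (List.mem_cons_self)
    simp [insRow, ha, ih fun b hb => hA b (List.mem_cons_of_mem _ hb)]

lemma insRow_bump_eq {x : ℕ} : ∀ {A B : List ℕ}, (∀ a ∈ A, a < x) →
    insRow x (A ++ x :: B) = (A ++ x :: B, some (x + 1)) := by
  intro A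
  induction A with
  | nil => intro B _; simp [insRow]
  | cons a A ih =>
    intro B hA
    have ha : a < x := hA a (List.mem_cons_self)
    simp [insRow, ha, ih fun b hb => hA b (List.mem_cons_of_mem _ hb)]

lemma insRow_bump_gt {x b : ℕ} (hb : x < b) : ∀ {A B : List ℕ}, (∀ a ∈ A, a < x) →
    insRow x (A ++ b :: B) = (A ++ x :: B, some b) := by
  intro A
  induction A with
  | nil =>
    intro B _
    have h1 : ¬ b < x := by omega
    have h2 : ¬ b = x := by omega
    simp [insRow, h1, h2]
  | cons a A ih =>
    intro B hA
    have ha : a < x := hA a (List.mem_cons_self)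
    simp [insRow, ha, ih fun c hc => hA c (List.mem_cons_of_mem _ hc)]

lemma insTab_nil (x : ℕ) : insTab x [] = [[x]] := rfl

lemma insTab_cons_none {x : ℕ} {r r' : List ℕ} {rs : List (List ℕ)}
    (h : insRow x r = (r', none)) : insTab x (r :: rs) = r' :: rs := by
  simp [insTab, h]

lemma insTab_cons_some {x y : ℕ} {r r' : List ℕ} {rs : List (List ℕ)}
    (h : insRow x r = (r', some y)) : insTab x (r :: rs) = r' :: insTab y rs := by
  simp [insTab, h]

/-! ### readingWord and structural lemmas -/

lemma readingWord_nil : readingWord [] = [] := rfl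

lemma readingWord_cons (S : List ℕ) (rest : List (List ℕ)) :
    readingWord (S :: rest) = readingWord rest ++ S := by
  simp [readingWord]

lemma rowStrict_cons {S : List ℕ} {T : List (List ℕ)} :
    RowStrict (S :: T) ↔ S.Pairwise (· < ·) ∧ RowStrict T := by
  simp [RowStrict]

lemma colStrict_cons {S : List ℕ} {T : List (List ℕ)} :
    ColStrict (S :: T) ↔
      (∀ j < (T.headD []).length, S.getD j 0 < (T.headD []).getD j 0) ∧ ColStrict T := by
  constructor
  · intro h
    constructor
    · intro j hj
      have := h 0 j
      rw [← getD_zero_headD]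
      rw [← getD_zero_headD] at hj
      cases T with
      | nil => simp at hj
      | cons S2 T' =>
        exact h 0 j (by simp) (by simpa using hj)
    · intro i j h1 h2
      exact h (i + 1) j (by simpa using Nat.succ_lt_succ h1) (by simpa using h2)
  · rintro ⟨h0, h⟩ i j h1 h2
    cases i with
    | zero =>
      rw [← getD_zero_headD] at h0
      simp only [List.getD_cons_zero, List.getD_cons_succ] at h2 ⊢
      exact h0 j h2
    | succ i =>
      simp only [List.getD_cons_succ] at h2 ⊢
      exact h i j (by simpa using h1) h2

lemma tabShape_cons {S : List ℕ} {T : List (List ℕ)} :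
    TabShape (S :: T) ↔ S ≠ [] ∧ (T.headD []).length ≤ S.length ∧ TabShape T := by
  constructor
  · rintro ⟨h1, h2⟩
    refine ⟨h1 S (List.mem_cons_self), ?_, fun r hr => h1 r (List.mem_cons_of_mem _ hr), ?_⟩
    · cases T with
      | nil => simp
      | cons S2 T' => simpa using h2 0 (by simp)
    · intro i hi
      have := h2 (i + 1) (by simpa using Nat.succ_lt_succ hi)
      simpa using this
  · rintro ⟨h1, h2, h3, h4⟩
    constructor
    · intro r hr
      rcases List.mem_cons.mp hr with rfl | hr
      · exact h1
      · exact h3 r hr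
    · intro i hi
      cases i with
      | zero =>
        rw [← getD_zero_headD] at h2
        simpa using h2
      | succ i =>
        have := h4 i (by simpa using hi)
        simpa using this

/-! ### The main Edelman–Greene insertion invariant -/

lemma EG_main (n : ℕ) (P : List (List ℕ)) :
    ∀ (x : ℕ) (U R : List ℕ),
    RowStrict P → ColStrict P → TabShape P →
    (∀ r ∈ P, ∀ e ∈ r, 1 ≤ e) →
    1 ≤ x →
    (∀ j < (P.headD []).length, R.getD j 0 < (P.headD []).getD j 0) →
    (∀ j ≤ ((P.headD []).takeWhile (· < x)).length, R.getD j 0 < x) →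
    invNum (permOfWord n (U ++ readingWord P ++ [x]))
        = U.length + (readingWord P).length + 1 →
    RowStrict (insTab x P) ∧ ColStrict (insTab x P) ∧ TabShape (insTab x P) ∧
      (∀ r ∈ insTab x P, ∀ e ∈ r, 1 ≤ e) ∧
      (∀ j < ((insTab x P).headD []).length,
        R.getD j 0 < ((insTab x P).headD []).getD j 0) ∧
      ((insTab x P).headD []).length ≤
        max (P.headD []).length (((P.headD []).takeWhile (· < x)).length + 1) ∧
      (readingWord (insTab x P)).length = (readingWord P).length + 1 ∧
      permOfWord n (readingWord (insTab x P)) =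
        permOfWord n (readingWord P) * adjT n x := by
  induction P with
  | nil =>
    intro x U R _ _ _ _ hx hcap hF2 _
    rw [insTab_nil]
    refine ⟨?_, ?_, ?_, ?_, ?_, ?_, ?_, ?_⟩
    · intro r hr
      have : r = [x] := by simpa using hr
      subst this; simp
    · intro i j h1 h2; simp at h1
    · refine ⟨fun r hr => ?_, fun i hi => by simp at hi⟩
      have : r = [x] := by simpa using hr
      subst this; simp
    · intro r hr e he
      have : r = [x] := by simpa using hr
      subst this
      have : e = x := by simpa using he
      omega
    · intro j hj
      simp only [List.headD_cons, List.length_cons, List.length_nil] at hj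
      interval_cases j
      simpa using hF2 0 (by simp)
    · simp
    · simp [readingWord]
    · simp [readingWord, permOfWord]
  | cons S rest IH =>
    intro x U R hrow hcol hshape hpos hx hcap hF2 hRed
    simp only [List.headD_cons] at hcap hF2 ⊢
    have hSsort : S.Pairwise (· < ·) := (rowStrict_cons.mp hrow).1
    have hrowrest : RowStrict rest := (rowStrict_cons.mp hrow).2
    have hcol0 : ∀ j < (rest.headD []).length, S.getD j 0 < (rest.headD []).getD j 0 :=
      (colStrict_cons.mp hcol).1
    have hcolrest : ColStrict rest := (colStrict_cons.mp hcol).2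
    obtain ⟨hSne, hlen0, hshaperest⟩ := tabShape_cons.mp hshape
    have hposS : ∀ e ∈ S, 1 ≤ e := hpos S (List.mem_cons_self)
    have hposrest : ∀ r ∈ rest, ∀ e ∈ r, 1 ≤ e :=
      fun r hr => hpos r (List.mem_cons_of_mem _ hr)
    set A := S.takeWhile (· < x) with hAdef
    set B := S.dropWhile (· < x) with hBdef
    have hAB : A ++ B = S := List.takeWhile_append_dropWhile ..
    have hAlt : ∀ a ∈ A, a < x := fun a ha => by simpa using List.mem_takeWhile_imp ha
    have hSplit : A.Pairwise (· < ·) ∧ B.Pairwise (· < ·) ∧ ∀ a ∈ A, ∀ b ∈ B, a < b := by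
      rw [← hAB] at hSsort
      exact sorted_append_iff.mp hSsort
    have hRedW : invNum (permOfWord n (U ++ readingWord (S :: rest) ++ [x]))
        = (U ++ readingWord (S :: rest) ++ [x]).length := by
      rw [hRed]; simp only [List.length_append, List.length_singleton]
    cases hBcase : B with
    | nil =>
      -- x is appended at the end of the first row
      have hSA : S = A := by rw [← hAB, hBcase, List.append_nil]
      have hins : insRow x S = (S ++ [x], none) := by
        rw [hSA]; exact insRow_all_lt hAlt
      rw [insTab_cons_none hins]
      have hposlen : A.length = S.length := by rw [hSA]
      refine ⟨?_, ?_, ?_, ?_, ?_, ?_, ?_, ?_⟩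
      · refine rowStrict_cons.mpr ⟨?_, hrowrest⟩
        refine sorted_append_iff.mpr ⟨hSsort, List.pairwise_singleton _ _, ?_⟩
        intro a ha b hb
        rw [List.mem_singleton] at hb
        subst hb
        exact hAlt a (hSA ▸ ha)
      · refine colStrict_cons.mpr ⟨?_, hcolrest⟩
        intro j hj
        rw [List.getD_append _ _ _ _ (lt_of_lt_of_le hj hlen0)]
        exact hcol0 j hj
      · refine tabShape_cons.mpr ⟨by simp, ?_, hshaperest⟩
        simp only [List.length_append, List.length_singleton]
        omega
      · intro r hr
        rcases List.mem_cons.mp hr with rfl | hr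
        · intro e he
          rcases List.mem_append.mp he with he | he
          · exact hposS e he
          · rw [List.mem_singleton] at he; omega
        · exact hposrest r hr
      · intro j hj
        simp only [List.headD_cons, List.length_append, List.length_singleton] at hj ⊢
        rcases Nat.lt_or_ge j S.length with h' | h'
        · rw [List.getD_append _ _ _ _ h']
          exact hcap j h'
        · have hj' : j = S.length := by omega
          subst hj'
          rw [List.getD_append_right _ _ _ _ (le_refl _)]
          simpa using hF2 S.length (by omega)
      · simp only [List.headD_cons, List.length_append, List.length_singleton]
        omega
      · simp only [readingWord_cons, List.length_append, List.length_singleton]; omega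
      · simp only [readingWord_cons, permOfWord_append, permOfWord_singleton]
        rw [mul_assoc]
    | cons b0 Bt =>
      have hb0f : ¬ (b0 < x) := by
        have := dropWhile_head_false (hBdef ▸ hBcase)
        simpa using this
      have hxb0 : x ≤ b0 := by omega
      have hS_eq : S = A ++ b0 :: Bt := by rw [← hAB, hBcase]
      have hBsort : (b0 :: Bt).Pairwise (· < ·) := hBcase ▸ hSplit.2.1
      have hBtsort : Bt.Pairwise (· < ·) := (List.pairwise_cons.mp hBsort).2
      have hb0Bt : ∀ b ∈ Bt, b0 < b := (List.pairwise_cons.mp hBsort).1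
      have hABlt : ∀ a ∈ A, ∀ b ∈ B, a < b := hSplit.2.2
      have hAsort : A.Pairwise (· < ·) := hSplit.1
      -- the unified bump step
      obtain ⟨y, hy_gt, hy_le, hins, hkey⟩ :
          ∃ y, x < y ∧ y ≤ b0 + 1 ∧ insRow x S = (A ++ x :: Bt, some y) ∧
            permOfWord n (S ++ [x]) = adjT n y * permOfWord n (A ++ x :: Bt) := by
        rcases Nat.lt_or_ge x b0 with hlt | hge
        · -- strict bump: y = b0
          refine ⟨b0, hlt, by omega, ?_, ?_⟩
          · rw [hS_eq]; exact insRow_bump_gt hlt hAlt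
          · have hc1 : Commute (adjT n b0) (permOfWord n A) :=
              commute_adjT_permOfWord fun a ha => Or.inl (by have := hAlt a ha; omega)
            have hc2 : Commute (adjT n x) (permOfWord n Bt) :=
              commute_adjT_permOfWord fun b hb => Or.inr (by have := hb0Bt b hb; omega)
            have hc1' : permOfWord n A * adjT n b0 = adjT n b0 * permOfWord n A :=
              hc1.eq.symm
            have hc2' : permOfWord n Bt * adjT n x = adjT n x * permOfWord n Bt :=
              hc2.eq.symm
            rw [hS_eq]
            have e1 : (A ++ b0 :: Bt) ++ [x] = A ++ b0 :: (Bt ++ [x]) := by simp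
            rw [e1]
            simp only [permOfWord_append, permOfWord_cons, permOfWord_singleton,
              permOfWord_nil, mul_one, mul_assoc]
            calc permOfWord n A * (adjT n b0 * (permOfWord n Bt * adjT n x))
                = permOfWord n A * (adjT n b0 * (adjT n x * permOfWord n Bt)) := by
                  rw [hc2']
              _ = permOfWord n A * adjT n b0 * (adjT n x * permOfWord n Bt) := by
                  rw [mul_assoc]
              _ = adjT n b0 * permOfWord n A * (adjT n x * permOfWord n Bt) := by
                  rw [hc1']
              _ = adjT n b0 * (permOfWord n A * (adjT n x * permOfWord n Bt)) := by
                  rw [mul_assoc]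
        · -- equal bump: b0 = x, y = x + 1
          have hb0x : b0 = x := by omega
          subst hb0x
          by_cases hmem : b0 + 1 ∈ Bt
          · -- Bt starts with x+1
            cases hBt : Bt with
            | nil => rw [hBt] at hmem; simp at hmem
            | cons b1 B2 =>
              have hb1 : b1 = b0 + 1 := by
                rw [hBt] at hmem hb0Bt hBtsort
                rcases List.mem_cons.mp hmem with h' | h'
                · omega
                · have h1 := (List.pairwise_cons.mp hBtsort).1 _ h'
                  have h2 := hb0Bt b1 (List.mem_cons_self)
                  omega
              subst hb1
              have hB2 : ∀ b ∈ B2, b0 + 2 ≤ b := by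
                intro b hb
                have := (List.pairwise_cons.mp (hBt ▸ hBtsort)).1 b hb
                omega
              have hval : b0 + 1 < n := by
                have hmemW : b0 + 1 ∈ U ++ readingWord (S :: rest) ++ [b0] := by
                  have : b0 + 1 ∈ S := by
                    rw [hS_eq, hBt]
                    simp
                  rw [readingWord_cons]
                  simp only [List.mem_append]
                  exact Or.inl (Or.inr (Or.inr this))
                exact (reduced_letters hRedW _ hmemW).2
              refine ⟨b0 + 1, by omega, by omega, ?_, ?_⟩
              · rw [hS_eq, hBt]; exact insRow_bump_eq hAlt
              · have hc2 : Commute (adjT n b0) (permOfWord n B2) :=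
                  commute_adjT_permOfWord fun b hb => Or.inr (by have := hB2 b hb; omega)
                have hc1 : Commute (adjT n (b0 + 1)) (permOfWord n A) :=
                  commute_adjT_permOfWord fun a ha => Or.inl (by have := hAlt a ha; omega)
                have hc2' : permOfWord n B2 * adjT n b0 = adjT n b0 * permOfWord n B2 :=
                  hc2.eq.symm
                have hc1' : permOfWord n A * adjT n (b0 + 1)
                    = adjT n (b0 + 1) * permOfWord n A := hc1.eq.symm
                have hbraid := adjT_braid (n := n) (a := b0) hx hval
                have braid' : ∀ z : Equiv.Perm (Fin n),
                    adjT n b0 * (adjT n (b0 + 1) * (adjT n b0 * z))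
                      = adjT n (b0 + 1) * (adjT n b0 * (adjT n (b0 + 1) * z)) := by
                  intro z
                  rw [← mul_assoc, ← mul_assoc, hbraid]
                  simp only [mul_assoc]
                rw [hS_eq, hBt]
                have e1 : (A ++ b0 :: (b0+1) :: B2) ++ [b0]
                    = A ++ b0 :: (b0+1) :: (B2 ++ [b0]) := by simp
                rw [e1]
                simp only [permOfWord_append, permOfWord_cons, permOfWord_singleton,
                  permOfWord_nil, mul_one, mul_assoc]
                calc permOfWord n A * (adjT n b0 * (adjT n (b0+1) * (permOfWord n B2 * adjT n b0)))
                    = permOfWord n A * (adjT n b0 * (adjT n (b0+1) * (adjT n b0 * permOfWord n B2))) := by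
                      rw [hc2']
                  _ = permOfWord n A * (adjT n b0 * (adjT n (b0+1) * adjT n b0 * permOfWord n B2)) := by
                      simp only [mul_assoc]
                  _ = permOfWord n A * (adjT n (b0+1) * (adjT n b0 * (adjT n (b0+1) * permOfWord n B2))) := by
                      rw [show adjT n b0 * (adjT n (b0+1) * adjT n b0 * permOfWord n B2)
                          = adjT n b0 * (adjT n (b0+1) * (adjT n b0 * permOfWord n B2)) by
                        simp only [mul_assoc]]
                      rw [braid']
                  _ = permOfWord n A * adjT n (b0+1) * (adjT n b0 * (adjT n (b0+1) * permOfWord n B2)) := by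
                      rw [mul_assoc]
                  _ = adjT n (b0+1) * permOfWord n A * (adjT n b0 * (adjT n (b0+1) * permOfWord n B2)) := by
                      rw [hc1']
                  _ = adjT n (b0+1) * (permOfWord n A * (adjT n b0 * (adjT n (b0+1) * permOfWord n B2))) := by
                      rw [mul_assoc]
          · -- contradiction: the word was not reduced
            exfalso
            have hBt2 : ∀ b ∈ Bt, b0 + 2 ≤ b := by
              intro b hb
              have h1 := hb0Bt b hb
              have h2 : b ≠ b0 + 1 := fun h => hmem (h ▸ hb)
              omega
            have hc2 : Commute (adjT n b0) (permOfWord n Bt) :=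
              commute_adjT_permOfWord fun b hb => Or.inr (by have := hBt2 b hb; omega)
            have hc2' : permOfWord n Bt * adjT n b0 = adjT n b0 * permOfWord n Bt :=
              hc2.eq.symm
            have hSx : permOfWord n (S ++ [b0]) = permOfWord n (A ++ Bt) := by
              rw [hS_eq]
              have e1 : (A ++ b0 :: Bt) ++ [b0] = A ++ b0 :: (Bt ++ [b0]) := by simp
              rw [e1]
              simp only [permOfWord_append, permOfWord_cons, permOfWord_singleton,
                permOfWord_nil, mul_one, mul_assoc]
              rw [hc2']
              have e2 : adjT n b0 * (adjT n b0 * permOfWord n Bt) = permOfWord n Bt := by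
                rw [← mul_assoc, adjT_mul_self, one_mul]
              rw [e2]
            have hfull : permOfWord n (U ++ readingWord (S :: rest) ++ [b0])
                = permOfWord n (U ++ (readingWord rest ++ (A ++ Bt))) := by
              rw [readingWord_cons]
              have e1 : U ++ (readingWord rest ++ S) ++ [b0]
                  = U ++ (readingWord rest ++ (S ++ [b0])) := by simp
              rw [e1]
              simp only [permOfWord_append, hSx]
            have hb1 := invNum_le_length n (U ++ (readingWord rest ++ (A ++ Bt)))
            rw [← hfull] at hb1
            rw [hRed] at hb1
            have hlenS : S.length = A.length + Bt.length + 1 := by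
              rw [hS_eq]; simp only [List.length_append, List.length_cons]; omega
            simp only [readingWord_cons, List.length_append] at hb1 ⊢
            omega
      -- now the uniform treatment
      set S' := A ++ x :: Bt with hS'def
      rw [insTab_cons_some hins]
      have hlenS : S.length = A.length + Bt.length + 1 := by
        rw [hS_eq]; simp only [List.length_append, List.length_cons]; omega
      have hlenS' : S'.length = S.length := by
        rw [hS'def, hS_eq]; simp only [List.length_append, List.length_cons]
      have hxBt : ∀ b ∈ Bt, x < b := fun b hb => lt_of_le_of_lt hxb0 (hb0Bt b hb)
      have hS'sort : S'.Pairwise (· < ·) := by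
        refine sorted_append_iff.mpr ⟨hAsort, ?_, ?_⟩
        · exact List.pairwise_cons.mpr ⟨hxBt, hBtsort⟩
        · intro a ha b hb
          rcases List.mem_cons.mp hb with rfl | hb
          · exact hAlt a ha
          · exact lt_trans (hAlt a ha) (hxBt b hb)
      have hS'getD_eq : ∀ j, j ≠ A.length → S'.getD j 0 = S.getD j 0 := by
        intro j hj
        rcases Nat.lt_or_ge j A.length with h' | h'
        · rw [hS'def, hS_eq, List.getD_append _ _ _ _ h', List.getD_append _ _ _ _ h']
        · have h'' : A.length < j := by omega
          rw [hS'def, hS_eq, List.getD_append_right _ _ _ _ (by omega),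
            List.getD_append_right _ _ _ _ (by omega)]
          have e1 : j - A.length = (j - A.length - 1) + 1 := by omega
          rw [e1]
          simp [List.getD_cons_succ]
      have hS'getD_pos : S'.getD A.length 0 = x := by
        rw [hS'def, List.getD_append_right _ _ _ _ (le_refl _)]
        simp
      have hSgetD_pos : S.getD A.length 0 = b0 := by
        rw [hS_eq, List.getD_append_right _ _ _ _ (le_refl _)]
        simp
      have hAgetD : ∀ j < A.length, A.getD j 0 < x := fun j hj => hAlt _ (getD_mem hj)
      have hApos : A.length = (S.takeWhile (· < x)).length := by rw [hAdef]
      have hAltS : A.length < S.length := by omega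
      -- inner reduced-word hypothesis
      have hkey' : permOfWord n S * adjT n x = adjT n y * permOfWord n S' := by
        have := hkey
        rw [permOfWord_append, permOfWord_singleton] at this
        exact this
      have hRedInner : invNum (permOfWord n (U ++ readingWord rest ++ [y]))
          = U.length + (readingWord rest).length + 1 := by
        have hperm2 : permOfWord n ((U ++ readingWord rest ++ [y]) ++ S')
            = permOfWord n (U ++ readingWord (S :: rest) ++ [x]) := by
          rw [readingWord_cons]
          simp only [permOfWord_append, permOfWord_singleton, mul_assoc]
          rw [← hkey']
        have hRed2 : invNum (permOfWord n ((U ++ readingWord rest ++ [y]) ++ S'))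
            = (U ++ readingWord rest ++ [y]).length + S'.length := by
          rw [hperm2, hRed]
          simp only [readingWord_cons, List.length_append, List.length_singleton]
          try omega
        have := reduced_prefix hRed2
        simpa [Nat.add_assoc] using this
      -- cap hypotheses for the inner call
      have hcapInner : ∀ j < (rest.headD []).length,
          S'.getD j 0 < (rest.headD []).getD j 0 := by
        intro j hj
        rcases eq_or_ne j A.length with rfl | hne
        · rw [hS'getD_pos]
          calc x ≤ b0 := hxb0
            _ = S.getD A.length 0 := hSgetD_pos.symm
            _ < (rest.headD []).getD A.length 0 := hcol0 _ hj
        · rw [hS'getD_eq j hne]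
          exact hcol0 j hj
      have hpos2le : ((rest.headD []).takeWhile (· < y)).length ≤ A.length := by
        rcases Nat.lt_or_ge A.length (rest.headD []).length with h' | h'
        · apply takeWhile_length_le_of_not
          have h1 : b0 < (rest.headD []).getD A.length 0 := by
            rw [← hSgetD_pos]; exact hcol0 _ h'
          simp only [decide_eq_false_iff_not, not_lt]
          omega
        · exact le_trans (takeWhile_length_le _ _) h'
      have hF2Inner : ∀ j ≤ ((rest.headD []).takeWhile (· < y)).length,
          S'.getD j 0 < y := by
        intro j hj
        have hj' : j ≤ A.length := le_trans hj hpos2le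
        rcases eq_or_lt_of_le hj' with rfl | h'
        · rw [hS'getD_pos]; exact hy_gt
        · rw [hS'def, List.getD_append _ _ _ _ h']
          exact lt_trans (hAgetD j h') hy_gt
      have hy1 : 1 ≤ y := by omega
      obtain ⟨c1, c2, c3, c4, c5, c6, c7, c8⟩ :=
        IH y U S' hrowrest hcolrest hshaperest hposrest hy1 hcapInner hF2Inner hRedInner
      have hT2len : ((insTab y rest).headD []).length ≤ S'.length := by
        refine le_trans c6 (max_le ?_ ?_)
        · omega
        · have := hpos2le; omega
      refine ⟨?_, ?_, ?_, ?_, ?_, ?_, ?_, ?_⟩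
      · exact rowStrict_cons.mpr ⟨hS'sort, c1⟩
      · exact colStrict_cons.mpr ⟨c5, c2⟩
      · refine tabShape_cons.mpr ⟨?_, hT2len, c3⟩
        rw [hS'def]
        simp
      · intro r hr
        rcases List.mem_cons.mp hr with rfl | hr
        · intro e he
          rw [hS'def] at he
          rcases List.mem_append.mp he with he | he
          · exact hposS e (hS_eq ▸ List.mem_append_left _ he)
          · rcases List.mem_cons.mp he with rfl | he
            · omega
            · exact hposS e (hS_eq ▸ (List.mem_append_right _ (List.mem_cons_of_mem _ he)))
        · exact c4 r hr
      · intro j hj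
        simp only [List.headD_cons] at hj ⊢
        rcases eq_or_ne j A.length with rfl | hne
        · rw [hS'getD_pos]
          exact hF2 A.length (le_of_eq hApos)
        · rw [hS'getD_eq j hne]
          exact hcap j (by omega)
      · simp only [List.headD_cons]
        calc S'.length = S.length := hlenS'
          _ ≤ max S.length ((S.takeWhile (· < x)).length + 1) := le_max_left _ _
      · rw [readingWord_cons, readingWord_cons]
        simp only [List.length_append]
        omega
      · rw [readingWord_cons, readingWord_cons]
        simp only [permOfWord_append, mul_assoc]
        rw [c8]
        simp only [permOfWord_append, permOfWord_singleton, mul_assoc]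
        rw [← hkey']
  -- end

/-! ### Folding over the word -/

lemma Ptab_append (w : List ℕ) (x : ℕ) : Ptab (w ++ [x]) = insTab x (Ptab w) := by
  simp [Ptab, List.foldl_append]

lemma fold_good (n : ℕ) (w : List ℕ) (h : invNum (permOfWord n w) = w.length) :
    RowStrict (Ptab w) ∧ ColStrict (Ptab w) ∧ TabShape (Ptab w) ∧
      (∀ r ∈ Ptab w, ∀ e ∈ r, 1 ≤ e) ∧
      (readingWord (Ptab w)).length = w.length ∧
      permOfWord n (readingWord (Ptab w)) = permOfWord n w := by
  induction w using List.reverseRecOn with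
  | nil =>
    refine ⟨?_, ?_, ?_, ?_, ?_, ?_⟩ <;>
      simp [Ptab, readingWord, RowStrict, ColStrict, TabShape]
  | append_singleton w x ih =>
    have hpre : invNum (permOfWord n w) = w.length := by
      apply reduced_prefix (B := [x])
      rw [h]; simp
    obtain ⟨p1, p2, p3, p4, p5, p6⟩ := ih hpre
    have hx1 : 1 ≤ x := (reduced_letters h x (by simp)).1
    have hcap : ∀ j < ((Ptab w).headD []).length,
        ([] : List ℕ).getD j 0 < ((Ptab w).headD []).getD j 0 := by
      intro j hj
      simp only [List.getD_nil]
      cases hP : Ptab w with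
      | nil => rw [hP] at hj; simp at hj
      | cons S T =>
        simp only [hP, List.headD_cons] at hj ⊢
        exact p4 S (by rw [hP]; exact List.mem_cons_self) _ (getD_mem hj)
    have hF2 : ∀ j ≤ (((Ptab w).headD []).takeWhile (· < x)).length,
        ([] : List ℕ).getD j 0 < x := by
      intro j _
      simp only [List.getD_nil]; omega
    have hRed : invNum (permOfWord n ([] ++ readingWord (Ptab w) ++ [x]))
        = ([] : List ℕ).length + (readingWord (Ptab w)).length + 1 := by
      have he : permOfWord n ([] ++ readingWord (Ptab w) ++ [x])
          = permOfWord n (w ++ [x]) := by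
        simp only [List.nil_append, permOfWord_append, p6]
      rw [he, h]
      simp [p5]
    obtain ⟨c1, c2, c3, c4, c5, c6, c7, c8⟩ :=
      EG_main n (Ptab w) x [] [] p1 p2 p3 p4 hx1 hcap hF2 hRed
    rw [Ptab_append]
    refine ⟨c1, c2, c3, c4, ?_, ?_⟩
    · rw [c7, p5]; simp
    · rw [c8, p6, permOfWord_append, permOfWord_singleton]

end EGProof

/-- if `w` is a reduced word of `σ`, then `P(w)` is a row- and column-strict
Young tableau and its reading word is again a reduced word of `σ`. -/
theorem Ptab_strict_and_reading_reduced (n : ℕ) (σ : Equiv.Perm (Fin n)) (w : List ℕ)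
    (hw : IsReducedWord n σ w) :
    TabShape (Ptab w) ∧ RowStrict (Ptab w) ∧ ColStrict (Ptab w) ∧
      IsReducedWord n σ (readingWord (Ptab w)) := by
  obtain ⟨hlets, hperm, hlen⟩ := hw
  have h : invNum (permOfWord n w) = w.length := by rw [hperm, hlen]
  obtain ⟨p1, p2, p3, p4, p5, p6⟩ := EGProof.fold_good n w h
  have hred : invNum (permOfWord n (readingWord (Ptab w))) = (readingWord (Ptab w)).length := by
    rw [p6, p5, h]
  refine ⟨p3, p1, p2, EGProof.reduced_letters hred, ?_, ?_⟩
  · rw [p6, hperm]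
  · rw [p5, hlen]
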